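/- Let V1, V2, V3 be commuting bounded operators on a Hilbert space with V3 an isometry, V1 = V2*·V3, and spectral radii r(V1) ≤ 1 and r(V2) ≤ 1. Then ‖V1‖ ≤ 1 and ‖V2‖ ≤ 1. -/

import Mathlib

open ContinuousLinearMap
open scoped InnerProductSpace ENNReal NNReal

-- pointwise sq bound to opnorm sq bound
lemma aux_opnorm_sq {H : Type*} [NormedAddCommGroup H] [InnerProductSpace ℂ H]
    (A : H →L[ℂ] H) (C : ℝ) (hC : 0 ≤ C) (h : ∀ y, ‖A y‖^2 ≤ C * ‖y‖^2) : ‖A‖^2 ≤ C := by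
  have hb : ‖A‖ ≤ Real.sqrt C := by
    apply opNorm_le_bound _ (Real.sqrt_nonneg C)
    intro y
    have h1 : ‖A y‖ = Real.sqrt (‖A y‖^2) := (Real.sqrt_sq (norm_nonneg _)).symm
    rw [h1]
    calc Real.sqrt (‖A y‖^2) ≤ Real.sqrt (C * ‖y‖^2) := Real.sqrt_le_sqrt (h y)
      _ = Real.sqrt C * ‖y‖ := by rw [Real.sqrt_mul hC, Real.sqrt_sq (norm_nonneg _)]
  nlinarith [norm_nonneg A, Real.sq_sqrt hC, Real.sqrt_nonneg C]

lemma aux_pow_norm {H : Type*} [NormedAddCommGroup H] [InnerProductSpace ℂ H]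
    (X : H →L[ℂ] H) (h : ∀ u, ‖X u‖^2 ≤ ‖(X^2) u‖ * ‖u‖) :
    ∀ n : ℕ, ‖X^(n+1)‖ = ‖X‖^(n+1) := by
  have hsq : ‖X^2‖ = ‖X‖^2 := by
    have hle : ‖X‖^2 ≤ ‖X^2‖ := by
      apply aux_opnorm_sq _ _ (norm_nonneg _)
      intro y
      calc ‖X y‖^2 ≤ ‖(X^2) y‖ * ‖y‖ := h y
        _ ≤ (‖X^2‖ * ‖y‖) * ‖y‖ := by
            exact mul_le_mul_of_nonneg_right (le_opNorm _ _) (norm_nonneg _)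
        _ = ‖X^2‖ * ‖y‖^2 := by ring
    have hge : ‖X^2‖ ≤ ‖X‖^2 := by
      simpa [pow_two] using norm_mul_le X X
    linarith
  have hstep : ∀ n : ℕ, ‖X^(n+2)‖^2 ≤ ‖X^(n+3)‖ * ‖X^(n+1)‖ := by
    intro n
    apply aux_opnorm_sq _ _ (mul_nonneg (norm_nonneg _) (norm_nonneg _))
    intro y
    have h1 : (X^(n+2)) y = X ((X^(n+1)) y) := by
      rw [pow_succ']; rfl
    have h2 : (X^2) ((X^(n+1)) y) = (X^(n+3)) y := by
      have e : X^(n+3) = X^2 * X^(n+1) := by rw [← pow_add]; congr 1; omega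
      rw [e, ContinuousLinearMap.mul_apply]
    calc ‖(X^(n+2)) y‖^2 = ‖X ((X^(n+1)) y)‖^2 := by rw [h1]
      _ ≤ ‖(X^2) ((X^(n+1)) y)‖ * ‖(X^(n+1)) y‖ := h _
      _ = ‖(X^(n+3)) y‖ * ‖(X^(n+1)) y‖ := by rw [h2]
      _ ≤ (‖X^(n+3)‖ * ‖y‖) * (‖X^(n+1)‖ * ‖y‖) := by
          exact mul_le_mul (le_opNorm _ _) (le_opNorm _ _) (norm_nonneg _)
            (mul_nonneg (norm_nonneg _) (norm_nonneg _))
      _ = (‖X^(n+3)‖ * ‖X^(n+1)‖) * ‖y‖^2 := by ring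
  have main : ∀ n : ℕ, ‖X^(n+1)‖ = ‖X‖^(n+1) ∧ ‖X^(n+2)‖ = ‖X‖^(n+2) := by
    intro n
    induction n with
    | zero => exact ⟨by simp, by simpa using hsq⟩
    | succ k ih =>
      refine ⟨ih.2, ?_⟩
      by_cases hX : ‖X‖ = 0
      · have : X = 0 := norm_eq_zero.mp hX
        subst this
        simp [hX, zero_pow]
      · have hXpos : 0 < ‖X‖ := lt_of_le_of_ne (norm_nonneg _) (Ne.symm hX)
        have hle : ‖X^(k+3)‖ ≤ ‖X‖^(k+3) := norm_pow_le' X (by omega)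
        have hge : ‖X‖^(k+3) ≤ ‖X^(k+3)‖ := by
          have := hstep k
          rw [ih.1, ih.2] at this
          have hpos : (0:ℝ) < ‖X‖^(k+1) := pow_pos hXpos _
          have h2 : (‖X‖^(k+2))^2 = ‖X‖^(k+3) * ‖X‖^(k+1) := by ring
          rw [h2] at this
          exact le_of_mul_le_mul_right this hpos
        linarith
  exact fun n => (main n).1

theorem stmt_15 {H : Type*} [NormedAddCommGroup H] [InnerProductSpace ℂ H] [CompleteSpace H]
    (V1 V2 V3 : H →L[ℂ] H)
    (h12 : V1 * V2 = V2 * V1) (h13 : V1 * V3 = V3 * V1) (h23 : V2 * V3 = V3 * V2)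
    (hiso : adjoint V3 * V3 = 1)
    (h1 : V1 = adjoint V2 * V3)
    (hr1 : spectralRadius ℂ V1 ≤ 1) (hr2 : spectralRadius ℂ V2 ≤ 1) :
    ‖V1‖ ≤ 1 ∧ ‖V2‖ ≤ 1 := by
  -- Key hyponormal-style inequality
  have hkey : ∀ (X : H →L[ℂ] H) (v : H), ‖X v‖^2 ≤ ‖adjoint X (X v)‖ * ‖v‖ := by
    intro X v
    have e1 : (⟪adjoint X (X v), v⟫_ℂ) = ⟪X v, X v⟫_ℂ := adjoint_inner_left X v (X v)
    have e2 : ‖X v‖^2 = RCLike.re (⟪X v, X v⟫_ℂ) := by rw [inner_self_eq_norm_sq]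
    calc ‖X v‖^2 = RCLike.re (⟪adjoint X (X v), v⟫_ℂ) := by rw [e1, ← e2]
      _ ≤ ‖(⟪adjoint X (X v), v⟫_ℂ)‖ := RCLike.re_le_norm _
      _ ≤ ‖adjoint X (X v)‖ * ‖v‖ := norm_inner_le_norm _ _
  -- V3 is an isometry, so ‖V3‖ ≤ 1 and ‖adjoint V3‖ ≤ 1
  have hV3iso : ∀ x : H, ‖V3 x‖ = ‖x‖ := by
    intro x
    have e1 : (⟪V3 x, V3 x⟫_ℂ) = ⟪adjoint V3 (V3 x), x⟫_ℂ := (adjoint_inner_left V3 x (V3 x)).symm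
    have e2 : adjoint V3 (V3 x) = x := by
      have := congrFun (congrArg DFunLike.coe hiso) x
      simpa [ContinuousLinearMap.mul_apply] using this
    rw [e2] at e1
    have := congrArg RCLike.re e1
    rw [inner_self_eq_norm_sq, inner_self_eq_norm_sq] at this
    nlinarith [norm_nonneg (V3 x), norm_nonneg x]
  have hV3n : ‖V3‖ ≤ 1 :=
    opNorm_le_bound _ zero_le_one (fun x => by rw [hV3iso x, one_mul])
  have hV3a : ∀ z : H, ‖adjoint V3 z‖ ≤ ‖z‖ := by
    intro z
    have hna : ‖(adjoint V3 : H →L[ℂ] H)‖ = ‖V3‖ := LinearIsometryEquiv.norm_map adjoint V3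
    calc ‖adjoint V3 z‖ ≤ ‖(adjoint V3 : H →L[ℂ] H)‖ * ‖z‖ := le_opNorm _ _
      _ ≤ 1 * ‖z‖ := by
          exact mul_le_mul_of_nonneg_right (by rw [hna]; exact hV3n) (norm_nonneg _)
      _ = ‖z‖ := one_mul _
  have hiso' : star V3 * V3 = 1 := by rw [star_eq_adjoint]; exact hiso
  -- adjoint identities
  have hs1 : adjoint V1 = adjoint V3 * V2 := by
    rw [h1]
    simp only [← star_eq_adjoint, star_mul, star_star]
  have hs2 : adjoint V3 * V1 = adjoint V2 := by
    rw [h1]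
    simp only [← star_eq_adjoint]
    rw [← mul_assoc, ← star_mul, h23, star_mul, mul_assoc, hiso', mul_one]
  have ineq1 : ∀ y : H, ‖adjoint V1 y‖ ≤ ‖V2 y‖ := by
    intro y
    rw [hs1, ContinuousLinearMap.mul_apply]
    exact hV3a _
  have ineq2 : ∀ y : H, ‖adjoint V2 y‖ ≤ ‖V1 y‖ := by
    intro y
    rw [← hs2, ContinuousLinearMap.mul_apply]
    exact hV3a _
  -- the two basic inequalities
  have a' : ∀ v : H, ‖V1 v‖^2 ≤ ‖(V1*V2) v‖ * ‖v‖ := by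
    intro v
    calc ‖V1 v‖^2 ≤ ‖adjoint V1 (V1 v)‖ * ‖v‖ := hkey V1 v
      _ ≤ ‖V2 (V1 v)‖ * ‖v‖ := mul_le_mul_of_nonneg_right (ineq1 _) (norm_nonneg _)
      _ = ‖(V1*V2) v‖ * ‖v‖ := by rw [← ContinuousLinearMap.mul_apply, ← h12]
  have b' : ∀ u : H, ‖V2 u‖^2 ≤ ‖(V1*V2) u‖ * ‖u‖ := by
    intro u
    calc ‖V2 u‖^2 ≤ ‖adjoint V2 (V2 u)‖ * ‖u‖ := hkey V2 u
      _ ≤ ‖V1 (V2 u)‖ * ‖u‖ := mul_le_mul_of_nonneg_right (ineq2 _) (norm_nonneg _)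
      _ = ‖(V1*V2) u‖ * ‖u‖ := by rw [← ContinuousLinearMap.mul_apply]
  -- (V1*V2) satisfies the paranormal inequality
  have hP : ∀ u : H, ‖(V1*V2) u‖^2 ≤ ‖((V1*V2)^2) u‖ * ‖u‖ := by
    intro u
    have e0 : V1 (V2 u) = (V1*V2) u := (ContinuousLinearMap.mul_apply _ _ _).symm
    have ecomm : (V1*V2) (V2 u) = V2 ((V1*V2) u) := by
      have e : (V1*V2)*V2 = V2*(V1*V2) := by rw [h12, mul_assoc, h12]
      rw [← ContinuousLinearMap.mul_apply, e, ContinuousLinearMap.mul_apply]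
    have e1 : ‖(V1*V2) u‖^2 ≤ ‖V2 ((V1*V2) u)‖ * ‖V2 u‖ := by
      have h := a' (V2 u)
      rw [e0, ecomm] at h
      exact h
    have e2 := b' ((V1*V2) u)
    have e3 := b' u
    have esq : ((V1*V2)^2) u = (V1*V2) ((V1*V2) u) := by rw [pow_two, ContinuousLinearMap.mul_apply]
    rw [esq]
    by_cases hz : ‖(V1*V2) u‖ = 0
    · rw [hz]
      nlinarith [mul_nonneg (norm_nonneg ((V1*V2) ((V1*V2) u))) (norm_nonneg u)]
    · have hpos : 0 < ‖(V1*V2) u‖ := lt_of_le_of_ne (norm_nonneg _) (Ne.symm hz)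
      have A1 : (‖(V1*V2) u‖^2)^2 ≤ (‖V2 ((V1*V2) u)‖ * ‖V2 u‖)^2 :=
        pow_le_pow_left₀ (sq_nonneg _) e1 2
      have A2 : (‖V2 ((V1*V2) u)‖ * ‖V2 u‖)^2 =
          ‖V2 ((V1*V2) u)‖^2 * ‖V2 u‖^2 := by ring
      have A3 : ‖V2 ((V1*V2) u)‖^2 * ‖V2 u‖^2 ≤
          (‖(V1*V2) ((V1*V2) u)‖ * ‖(V1*V2) u‖) * (‖(V1*V2) u‖ * ‖u‖) :=
        mul_le_mul e2 e3 (sq_nonneg _) (mul_nonneg (norm_nonneg _) (norm_nonneg _))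
      have key : ‖(V1*V2) u‖^2 * ‖(V1*V2) u‖^2 ≤
          (‖(V1*V2) ((V1*V2) u)‖ * ‖u‖) * (‖(V1*V2) u‖^2) := by
        calc ‖(V1*V2) u‖^2 * ‖(V1*V2) u‖^2 = (‖(V1*V2) u‖^2)^2 := by ring
          _ ≤ (‖V2 ((V1*V2) u)‖ * ‖V2 u‖)^2 := A1
          _ = ‖V2 ((V1*V2) u)‖^2 * ‖V2 u‖^2 := A2
          _ ≤ (‖(V1*V2) ((V1*V2) u)‖ * ‖(V1*V2) u‖) * (‖(V1*V2) u‖ * ‖u‖) := A3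
          _ = (‖(V1*V2) ((V1*V2) u)‖ * ‖u‖) * (‖(V1*V2) u‖^2) := by ring
      exact le_of_mul_le_mul_right key (by positivity)
  have hpow := aux_pow_norm (V1*V2) hP
  -- spectral radius bound on V1*V2 via Gelfand
  have hcomm : Commute V1 V2 := h12
  have hbound : ∀ n : ℕ, 1 ≤ n →
      (‖V1*V2‖₊ : ℝ≥0∞) ≤ (‖V1^n‖₊ : ℝ≥0∞)^(1/(n:ℝ)) * (‖V2^n‖₊ : ℝ≥0∞)^(1/(n:ℝ)) := by
    intro n hn
    have hnR : ((n:ℝ)) ≠ 0 := Nat.cast_ne_zero.mpr (by omega)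
    have h1 : ‖(V1*V2)^n‖ = ‖V1*V2‖^n := by
      obtain ⟨m, rfl⟩ : ∃ m, n = m + 1 := ⟨n-1, by omega⟩
      exact hpow m
    have h1' : ‖(V1*V2)^n‖₊ = ‖V1*V2‖₊^n := by
      apply NNReal.coe_injective
      push_cast
      exact h1
    have hmulle : ‖(V1*V2)^n‖₊ ≤ ‖V1^n‖₊ * ‖V2^n‖₊ := by
      rw [hcomm.mul_pow]
      exact nnnorm_mul_le _ _
    have hx : (‖V1*V2‖₊ : ℝ≥0∞) = ((‖(V1*V2)^n‖₊ : ℝ≥0∞))^(1/(n:ℝ)) := by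
      rw [h1', ENNReal.coe_pow, ← ENNReal.rpow_natCast ((‖V1*V2‖₊ : ℝ≥0∞)) n,
        ← ENNReal.rpow_mul, mul_one_div, div_self hnR, ENNReal.rpow_one]
    rw [hx]
    calc ((‖(V1*V2)^n‖₊ : ℝ≥0∞))^(1/(n:ℝ))
        ≤ ((‖V1^n‖₊ : ℝ≥0∞) * (‖V2^n‖₊ : ℝ≥0∞))^(1/(n:ℝ)) := by
          apply ENNReal.rpow_le_rpow _ (by positivity)
          exact_mod_cast hmulle
      _ = (‖V1^n‖₊ : ℝ≥0∞)^(1/(n:ℝ)) * (‖V2^n‖₊ : ℝ≥0∞)^(1/(n:ℝ)) :=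
          ENNReal.mul_rpow_of_nonneg _ _ (by positivity)
  have t1 := spectrum.pow_nnnorm_pow_one_div_tendsto_nhds_spectralRadius V1
  have t2 := spectrum.pow_nnnorm_pow_one_div_tendsto_nhds_spectralRadius V2
  have hr1' : spectralRadius ℂ V1 ≠ ⊤ := ne_top_of_le_ne_top ENNReal.one_ne_top hr1
  have hr2' : spectralRadius ℂ V2 ≠ ⊤ := ne_top_of_le_ne_top ENNReal.one_ne_top hr2
  have tmul : Filter.Tendsto
      (fun n : ℕ => (‖V1^n‖₊ : ℝ≥0∞)^(1/(n:ℝ)) * (‖V2^n‖₊ : ℝ≥0∞)^(1/(n:ℝ)))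
      Filter.atTop (nhds (spectralRadius ℂ V1 * spectralRadius ℂ V2)) :=
    ENNReal.Tendsto.mul t1 (Or.inr hr2') t2 (Or.inr hr1')
  have hPle : (‖V1*V2‖₊ : ℝ≥0∞) ≤ spectralRadius ℂ V1 * spectralRadius ℂ V2 :=
    ge_of_tendsto tmul (Filter.eventually_atTop.mpr ⟨1, fun n hn => hbound n hn⟩)
  have hPle1 : (‖V1*V2‖₊ : ℝ≥0∞) ≤ 1 := by
    refine hPle.trans ?_
    calc spectralRadius ℂ V1 * spectralRadius ℂ V2 ≤ 1 * 1 := mul_le_mul' hr1 hr2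
      _ = 1 := one_mul 1
  have hP1 : ‖V1*V2‖ ≤ 1 := by
    have : ‖V1*V2‖₊ ≤ 1 := by exact_mod_cast hPle1
    exact_mod_cast this
  have hPu : ∀ u : H, ‖(V1*V2) u‖ ≤ ‖u‖ := by
    intro u
    calc ‖(V1*V2) u‖ ≤ ‖V1*V2‖ * ‖u‖ := le_opNorm _ _
      _ ≤ 1 * ‖u‖ := mul_le_mul_of_nonneg_right hP1 (norm_nonneg _)
      _ = ‖u‖ := one_mul _
  constructor
  · apply opNorm_le_bound _ zero_le_one
    intro v
    rw [one_mul]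
    have h := a' v
    have h2 := hPu v
    nlinarith [norm_nonneg (V1 v), norm_nonneg v]
  · apply opNorm_le_bound _ zero_le_one
    intro u
    rw [one_mul]
    have h := b' u
    have h2 := hPu u
    nlinarith [norm_nonneg (V2 u), norm_nonneg u]
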